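/- Let N, p, q be natural numbers, let H₁ be a p×N complex matrix, H₂ a q×N complex matrix, and Q an N×N complex positive semidefinite Hermitian matrix. Let H be the (p+q)×N matrix obtained by stacking H₁ on top of H₂. Then det(I_{p+q} + H Q H†), det(I_p + H₁ Q H₁†), and det(I_q + H₂ Q H₂†) are real numbers (each at least 1), and det(I_{p+q} + H Q H†) ≤ det(I_p + H₁ Q H₁†) · det(I_q + H₂ Q H₂†). -/

import Mathlib

open scoped ComplexOrder
open Matrix

section Aux
variable {n : Type*} [Fintype n] [DecidableEq n]

lemma dot_self_one {A : Matrix n n ℂ} (hA : A.IsHermitian) (i : n) :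
    star ⇑(hA.eigenvectorBasis i) ⬝ᵥ ⇑(hA.eigenvectorBasis i) = 1 := by
  have h := hA.eigenvectorBasis.orthonormal.1 i
  have h2 := EuclideanSpace.inner_eq_star_dotProduct (𝕜 := ℂ)
    (hA.eigenvectorBasis i) (hA.eigenvectorBasis i)
  rw [inner_self_eq_norm_sq_to_K, h] at h2
  rw [dotProduct_comm]; simpa using h2.symm

lemma eig_le_one {A : Matrix n n ℂ} (hA : A.IsHermitian)
    (h : (1 - A).PosSemidef) (i : n) : hA.eigenvalues i ≤ 1 := by
  have h2 := h.dotProduct_mulVec_nonneg ⇑(hA.eigenvectorBasis i)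
  rw [sub_mulVec, one_mulVec, dotProduct_sub, hA.mulVec_eigenvectorBasis,
    dotProduct_smul, dot_self_one hA i] at h2
  have h3 : (0:ℂ) ≤ ((1 - hA.eigenvalues i : ℝ) : ℂ) := by push_cast; simpa using h2
  have := (Complex.zero_le_real).1 h3
  linarith

lemma one_le_eig {A : Matrix n n ℂ} (hA : A.IsHermitian)
    (h : (A - 1).PosSemidef) (i : n) : 1 ≤ hA.eigenvalues i := by
  have h2 := h.dotProduct_mulVec_nonneg ⇑(hA.eigenvectorBasis i)
  rw [sub_mulVec, one_mulVec, dotProduct_sub, hA.mulVec_eigenvectorBasis,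
    dotProduct_smul, dot_self_one hA i] at h2
  have h3 : (0:ℂ) ≤ ((hA.eigenvalues i - 1 : ℝ) : ℂ) := by push_cast; simpa using h2
  have := (Complex.zero_le_real).1 h3
  linarith

lemma det_mem_unit {A : Matrix n n ℂ} (hA : A.PosSemidef)
    (h : (1 - A).PosSemidef) : ∃ t : ℝ, A.det = (t:ℂ) ∧ 0 ≤ t ∧ t ≤ 1 := by
  refine ⟨∏ i, hA.1.eigenvalues i, ?_, ?_, ?_⟩
  · rw [hA.1.det_eq_prod_eigenvalues]; push_cast; rfl
  · exact Finset.prod_nonneg fun i _ => hA.eigenvalues_nonneg i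
  · apply Finset.prod_le_one
    · exact fun i _ => hA.eigenvalues_nonneg i
    · exact fun i _ => eig_le_one hA.1 h i

lemma det_one_add_psd {P : Matrix n n ℂ} (hP : P.PosSemidef) :
    ∃ t : ℝ, (1 + P).det = (t:ℂ) ∧ 1 ≤ t := by
  have hA : (1 + P).PosSemidef := Matrix.PosSemidef.add Matrix.PosSemidef.one hP
  refine ⟨∏ i, hA.1.eigenvalues i, ?_, ?_⟩
  · rw [hA.1.det_eq_prod_eigenvalues]; push_cast; rfl
  · calc (1:ℝ) = ∏ _i : n, 1 := by simp
      _ ≤ ∏ i, hA.1.eigenvalues i :=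
        Finset.prod_le_prod (by simp) fun i _ => one_le_eig hA.1 (by simpa using hP) i

open scoped MatrixOrder in
lemma det_sub_le {D X : Matrix n n ℂ} (hD : D.PosDef) (hX : X.PosSemidef)
    (hDX : (D - X).PosSemidef) :
    ∃ t : ℝ, (D - X).det = (t:ℂ) * D.det ∧ 0 ≤ t ∧ t ≤ 1 := by
  set S := CFC.sqrt D with hSdef
  have hS : S.PosSemidef := (CFC.sqrt_nonneg D).posSemidef
  have hSS : S * S = D := CFC.sqrt_mul_sqrt_self D hD.posSemidef.nonneg
  have hdetS : IsUnit S.det := by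
    have hm : S.det * S.det = D.det := by rw [← det_mul, hSS]
    have hDdet : D.det ≠ 0 := hD.det_pos.ne'
    exact isUnit_iff_ne_zero.2 fun h0 => hDdet (by rw [← hm, h0, mul_zero])
  have hmul1 : S * S⁻¹ = 1 := Matrix.mul_nonsing_inv _ hdetS
  have hmul2 : S⁻¹ * S = 1 := Matrix.nonsing_inv_mul _ hdetS
  have hSinv : S⁻¹.IsHermitian := hS.1.inv
  have hM : (S⁻¹ * X * S⁻¹).PosSemidef := by
    have := hX.mul_mul_conjTranspose_same S⁻¹
    rwa [hSinv.eq] at this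
  have hid : S⁻¹ * D * S⁻¹ = 1 := by
    rw [← hSS, ← Matrix.mul_assoc, hmul2, Matrix.one_mul, hmul1]
  have h1M : (1 - (S⁻¹ * X * S⁻¹)).PosSemidef := by
    have hps := hDX.mul_mul_conjTranspose_same S⁻¹
    rw [hSinv.eq] at hps
    have he : S⁻¹ * (D - X) * S⁻¹ = 1 - S⁻¹ * X * S⁻¹ := by
      rw [Matrix.mul_sub, Matrix.sub_mul, hid]
    rwa [he] at hps
  obtain ⟨t, ht, ht0, ht1⟩ := det_mem_unit h1M (by simpa using hM)
  refine ⟨t, ?_, ht0, ht1⟩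
  have hfact : D - X = S * (1 - (S⁻¹ * X * S⁻¹)) * S := by
    rw [Matrix.mul_sub, Matrix.mul_one, Matrix.sub_mul, hSS]
    congr 1
    have ha : S * (S⁻¹ * X * S⁻¹) * S = S * S⁻¹ * X * (S⁻¹ * S) := by
      simp only [Matrix.mul_assoc]
    rw [ha, hmul1, hmul2, Matrix.one_mul, Matrix.mul_one]
  have hDd : D.det = S.det * S.det := by rw [← hSS, det_mul]
  rw [hfact, det_mul, det_mul, ht, hDd]
  ring

end Aux

/-- Splitting of the MIMO cut-set log-determinant: for `H` obtained by stacking `H₁`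
on top of `H₂` and `Q` positive semidefinite, the determinants of `I + H Q H†`,
`I + H₁ Q H₁†`, and `I + H₂ Q H₂†` are real numbers at least `1`, and
`det(I + H Q H†) ≤ det(I + H₁ Q H₁†) · det(I + H₂ Q H₂†)`. -/
theorem det_one_add_stacked_mul_posSemidef_le (N p q : ℕ)
    (H₁ : Matrix (Fin p) (Fin N) ℂ) (H₂ : Matrix (Fin q) (Fin N) ℂ)
    (Q : Matrix (Fin N) (Fin N) ℂ) (hQ : Q.PosSemidef) :
    (1 + fromRows H₁ H₂ * Q * (fromRows H₁ H₂)ᴴ).det.im = 0 ∧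
    (1 + H₁ * Q * H₁ᴴ).det.im = 0 ∧
    (1 + H₂ * Q * H₂ᴴ).det.im = 0 ∧
    1 ≤ (1 + fromRows H₁ H₂ * Q * (fromRows H₁ H₂)ᴴ).det.re ∧
    1 ≤ (1 + H₁ * Q * H₁ᴴ).det.re ∧
    1 ≤ (1 + H₂ * Q * H₂ᴴ).det.re ∧
    (1 + fromRows H₁ H₂ * Q * (fromRows H₁ H₂)ᴴ).det.re ≤
      (1 + H₁ * Q * H₁ᴴ).det.re * (1 + H₂ * Q * H₂ᴴ).det.re := by
  have hA : (1 + H₁ * Q * H₁ᴴ).PosDef :=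
    Matrix.PosDef.one.add_posSemidef (hQ.mul_mul_conjTranspose_same H₁)
  have hD : (1 + H₂ * Q * H₂ᴴ).PosDef :=
    Matrix.PosDef.one.add_posSemidef (hQ.mul_mul_conjTranspose_same H₂)
  set A := 1 + H₁ * Q * H₁ᴴ with hAdef
  set D := 1 + H₂ * Q * H₂ᴴ with hDdef
  set B := H₁ * Q * H₂ᴴ with hBdef
  have hBH : Bᴴ = H₂ * Q * H₁ᴴ := by
    simp [hBdef, Matrix.conjTranspose_mul, Matrix.mul_assoc, hQ.1.eq]
  have hblock : 1 + fromRows H₁ H₂ * Q * (fromRows H₁ H₂)ᴴ = fromBlocks A B Bᴴ D := by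
    rw [conjTranspose_fromRows_eq_fromCols_conjTranspose, fromRows_mul,
      fromRows_mul_fromCols, ← fromBlocks_one, fromBlocks_add, hBH]
    simp [hAdef, hBdef, hDdef]
  haveI : Invertible A := A.invertibleOfIsUnitDet (isUnit_iff_ne_zero.2 hA.det_pos.ne')
  have hfull : (fromBlocks A B Bᴴ D).PosSemidef := by
    rw [← hblock]
    exact Matrix.PosSemidef.add Matrix.PosSemidef.one
      (hQ.mul_mul_conjTranspose_same (fromRows H₁ H₂))
  have hschur : (D - Bᴴ * A⁻¹ * B).PosSemidef :=
    (Matrix.PosDef.fromBlocks₁₁ B D hA).1 hfull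
  have hXpsd : (Bᴴ * A⁻¹ * B).PosSemidef :=
    (hA.inv.posSemidef).conjTranspose_mul_mul_same B
  obtain ⟨t, ht, ht0, ht1⟩ := det_sub_le hD hXpsd hschur
  obtain ⟨a, haeq, ha1⟩ := det_one_add_psd (hQ.mul_mul_conjTranspose_same H₁)
  obtain ⟨d, hdeq, hd1⟩ := det_one_add_psd (hQ.mul_mul_conjTranspose_same H₂)
  obtain ⟨f, hfeq, hf1⟩ := det_one_add_psd (hQ.mul_mul_conjTranspose_same (fromRows H₁ H₂))
  have hdet : (1 + fromRows H₁ H₂ * Q * (fromRows H₁ H₂)ᴴ).det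
      = A.det * (D - Bᴴ * A⁻¹ * B).det := by
    rw [hblock, Matrix.det_fromBlocks₁₁, Matrix.invOf_eq_nonsing_inv]
  have hf_eq : (f:ℂ) = (a * (t * d) : ℝ) := by
    rw [← hfeq, hdet, ht, haeq, hdeq]; push_cast; ring
  have hf' : f = a * (t * d) := by exact_mod_cast hf_eq
  refine ⟨?_, ?_, ?_, ?_, ?_, ?_, ?_⟩
  · rw [hfeq]; simp
  · rw [haeq]; simp
  · rw [hdeq]; simp
  · rw [hfeq]; simpa using hf1
  · rw [haeq]; simpa using ha1
  · rw [hdeq]; simpa using hd1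
  · rw [hfeq, haeq, hdeq]
    simp only [Complex.ofReal_re]
    rw [hf']
    have htd : t * d ≤ d := mul_le_of_le_one_left (by linarith) ht1
    calc a * (t * d) ≤ a * d := mul_le_mul_of_nonneg_left htd (by linarith)
      _ = a * d := rfl
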